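/- arXiv:2006.03945 — 3 statements merged into one kernel-verified Lean document; each statement's English description precedes it below -/
import Mathlib

section
/- Fix distinct real numbers t₁ < t₂ < ⋯ < t_k in (0, π) and positive integers m₁,…,m_k with m₁ + ⋯ + m_k = m/2. Let 𝒯 be the (m/2 + 1)-dimensional space of trigonometric polynomials: 𝒯 = span{1, cos 2t, sin 2t, …, cos((m/2)t), sin((m/2)t)} if m/2 is even, and 𝒯 = span{cos t, sin t, cos 3t, sin 3t, …, cos((m/2)t), sin((m/2)t)} if m/2 is odd. Then the linear map 𝒯 → ℝ^{m/2} sending h to the tuple (h^{(l)}(t_j))_{0 ≤ l ≤ m_j−1, 1 ≤ j ≤ k} is surjective; equivalently its kernel is one-dimensional, so there is at most one function f ∈ 𝒯 with f(0) = 1 vanishing to order m_j at each t_j. -/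
open Real

namespace Stmt8


def S (M : ℕ) : Set (ℝ → ℝ) :=
  {f : ℝ → ℝ | ∃ s : ℕ, s ≤ M ∧ s % 2 = M % 2 ∧
    ((f = fun x => Real.cos ((s : ℝ) * x)) ∨ (f = fun x => Real.sin ((s : ℝ) * x)))}

def T (M : ℕ) : Submodule ℝ (ℝ → ℝ) := Submodule.span ℝ (S M)

lemma cos_nat_mem (M s : ℕ) (h1 : s ≤ M) (h2 : s % 2 = M % 2) :
    (fun x => Real.cos ((s : ℝ) * x)) ∈ T M :=
  Submodule.subset_span ⟨s, h1, h2, Or.inl rfl⟩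

lemma sin_nat_mem (M s : ℕ) (h1 : s ≤ M) (h2 : s % 2 = M % 2) :
    (fun x => Real.sin ((s : ℝ) * x)) ∈ T M :=
  Submodule.subset_span ⟨s, h1, h2, Or.inr rfl⟩

lemma cos_int_mem (M : ℕ) (s : ℤ) (h1 : s.natAbs ≤ M) (h2 : s.natAbs % 2 = M % 2) :
    (fun x => Real.cos ((s : ℝ) * x)) ∈ T M := by
  obtain ⟨n, rfl | rfl⟩ := Int.eq_nat_or_neg s
  · simp only [Int.natAbs_natCast] at h1 h2
    simpa using cos_nat_mem M n h1 h2
  · simp only [Int.natAbs_neg, Int.natAbs_natCast] at h1 h2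
    have e : (fun x => Real.cos (((-(n : ℤ) : ℤ) : ℝ) * x))
        = fun x => Real.cos ((n : ℝ) * x) := by
      funext x; push_cast; rw [neg_mul, Real.cos_neg]
    rw [e]; exact cos_nat_mem M n h1 h2

lemma sin_int_mem (M : ℕ) (s : ℤ) (h1 : s.natAbs ≤ M) (h2 : s.natAbs % 2 = M % 2) :
    (fun x => Real.sin ((s : ℝ) * x)) ∈ T M := by
  obtain ⟨n, rfl | rfl⟩ := Int.eq_nat_or_neg s
  · simp only [Int.natAbs_natCast] at h1 h2
    simpa using sin_nat_mem M n h1 h2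
  · simp only [Int.natAbs_neg, Int.natAbs_natCast] at h1 h2
    have e : (fun x => Real.sin (((-(n : ℤ) : ℤ) : ℝ) * x))
        = -(fun x => Real.sin ((n : ℝ) * x)) := by
      funext x; push_cast; simp [neg_mul, Real.sin_neg]
    rw [e]; exact (T M).neg_mem (sin_nat_mem M n h1 h2)

/-- core product-to-sum memberships -/
lemma sin_mul_cos_mem (M s : ℕ) (h1 : s ≤ M) (h2 : s % 2 = M % 2) :
    (fun x => Real.sin x * Real.cos ((s : ℝ) * x)) ∈ T (M + 1) := by
  have hp : (fun x => Real.sin x * Real.cos ((s : ℝ) * x))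
      = (1/2 : ℝ) • (fun x => Real.sin ((((s : ℤ) + 1 : ℤ) : ℝ) * x))
        - (1/2 : ℝ) • (fun x => Real.sin ((((s : ℤ) - 1 : ℤ) : ℝ) * x)) := by
    funext x
    simp only [Pi.sub_apply, Pi.smul_apply, smul_eq_mul]
    push_cast
    rw [show ((s : ℝ) + 1) * x = (s : ℝ) * x + x by ring,
        show ((s : ℝ) - 1) * x = (s : ℝ) * x - x by ring,
        Real.sin_add, Real.sin_sub]
    ring
  rw [hp]
  exact sub_mem ((T _).smul_mem _ (sin_int_mem _ _ (by omega) (by omega)))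
    ((T _).smul_mem _ (sin_int_mem _ _ (by omega) (by omega)))

lemma cos_mul_sin_mem (M s : ℕ) (h1 : s ≤ M) (h2 : s % 2 = M % 2) :
    (fun x => Real.cos x * Real.sin ((s : ℝ) * x)) ∈ T (M + 1) := by
  have hp : (fun x => Real.cos x * Real.sin ((s : ℝ) * x))
      = (1/2 : ℝ) • (fun x => Real.sin ((((s : ℤ) + 1 : ℤ) : ℝ) * x))
        + (1/2 : ℝ) • (fun x => Real.sin ((((s : ℤ) - 1 : ℤ) : ℝ) * x)) := by
    funext x
    simp only [Pi.add_apply, Pi.smul_apply, smul_eq_mul]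
    push_cast
    rw [show ((s : ℝ) + 1) * x = (s : ℝ) * x + x by ring,
        show ((s : ℝ) - 1) * x = (s : ℝ) * x - x by ring,
        Real.sin_add, Real.sin_sub]
    ring
  rw [hp]
  exact add_mem ((T _).smul_mem _ (sin_int_mem _ _ (by omega) (by omega)))
    ((T _).smul_mem _ (sin_int_mem _ _ (by omega) (by omega)))

lemma sin_mul_sin_mem (M s : ℕ) (h1 : s ≤ M) (h2 : s % 2 = M % 2) :
    (fun x => Real.sin x * Real.sin ((s : ℝ) * x)) ∈ T (M + 1) := by
  have hp : (fun x => Real.sin x * Real.sin ((s : ℝ) * x))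
      = (1/2 : ℝ) • (fun x => Real.cos ((((s : ℤ) - 1 : ℤ) : ℝ) * x))
        - (1/2 : ℝ) • (fun x => Real.cos ((((s : ℤ) + 1 : ℤ) : ℝ) * x)) := by
    funext x
    simp only [Pi.sub_apply, Pi.smul_apply, smul_eq_mul]
    push_cast
    rw [show ((s : ℝ) + 1) * x = (s : ℝ) * x + x by ring,
        show ((s : ℝ) - 1) * x = (s : ℝ) * x - x by ring,
        Real.cos_add, Real.cos_sub]
    ring
  rw [hp]
  exact sub_mem ((T _).smul_mem _ (cos_int_mem _ _ (by omega) (by omega)))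
    ((T _).smul_mem _ (cos_int_mem _ _ (by omega) (by omega)))

lemma cos_mul_cos_mem (M s : ℕ) (h1 : s ≤ M) (h2 : s % 2 = M % 2) :
    (fun x => Real.cos x * Real.cos ((s : ℝ) * x)) ∈ T (M + 1) := by
  have hp : (fun x => Real.cos x * Real.cos ((s : ℝ) * x))
      = (1/2 : ℝ) • (fun x => Real.cos ((((s : ℤ) - 1 : ℤ) : ℝ) * x))
        + (1/2 : ℝ) • (fun x => Real.cos ((((s : ℤ) + 1 : ℤ) : ℝ) * x)) := by
    funext x
    simp only [Pi.add_apply, Pi.smul_apply, smul_eq_mul]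
    push_cast
    rw [show ((s : ℝ) + 1) * x = (s : ℝ) * x + x by ring,
        show ((s : ℝ) - 1) * x = (s : ℝ) * x - x by ring,
        Real.cos_add, Real.cos_sub]
    ring
  rw [hp]
  exact add_mem ((T _).smul_mem _ (cos_int_mem _ _ (by omega) (by omega)))
    ((T _).smul_mem _ (cos_int_mem _ _ (by omega) (by omega)))

lemma mul_sin_mem (M : ℕ) (c : ℝ) {f : ℝ → ℝ} (hf : f ∈ T M) :
    (fun x => Real.sin (x - c) * f x) ∈ T (M + 1) := by
  induction hf using Submodule.span_induction with
  | mem g hg =>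
    obtain ⟨s, h1, h2, hg | hg⟩ := hg <;> subst hg
    · have : (fun x => Real.sin (x - c) * Real.cos ((s : ℝ) * x))
          = Real.cos c • (fun x => Real.sin x * Real.cos ((s : ℝ) * x))
            - Real.sin c • (fun x => Real.cos x * Real.cos ((s : ℝ) * x)) := by
        funext x
        simp only [Pi.sub_apply, Pi.smul_apply, smul_eq_mul, Real.sin_sub]
        ring
      rw [this]
      exact sub_mem ((T _).smul_mem _ (sin_mul_cos_mem M s h1 h2))
        ((T _).smul_mem _ (cos_mul_cos_mem M s h1 h2))
    · have : (fun x => Real.sin (x - c) * Real.sin ((s : ℝ) * x))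
          = Real.cos c • (fun x => Real.sin x * Real.sin ((s : ℝ) * x))
            - Real.sin c • (fun x => Real.cos x * Real.sin ((s : ℝ) * x)) := by
        funext x
        simp only [Pi.sub_apply, Pi.smul_apply, smul_eq_mul, Real.sin_sub]
        ring
      rw [this]
      exact sub_mem ((T _).smul_mem _ (sin_mul_sin_mem M s h1 h2))
        ((T _).smul_mem _ (cos_mul_sin_mem M s h1 h2))
  | zero =>
    have : (fun x => Real.sin (x - c) * (0 : ℝ → ℝ) x) = (0 : ℝ → ℝ) := by funext x; simp
    rw [this]; exact zero_mem _
  | add g₁ g₂ _ _ hg₁ hg₂ =>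
    have : (fun x => Real.sin (x - c) * (g₁ + g₂) x)
        = (fun x => Real.sin (x - c) * g₁ x) + (fun x => Real.sin (x - c) * g₂ x) := by
      funext x; simp [mul_add]
    rw [this]; exact add_mem hg₁ hg₂
  | smul a g _ hg =>
    have : (fun x => Real.sin (x - c) * (a • g) x)
        = a • (fun x => Real.sin (x - c) * g x) := by
      funext x; simp [smul_eq_mul]; ring
    rw [this]; exact (T _).smul_mem _ hg

lemma mul_cos_mem (M : ℕ) (c : ℝ) {f : ℝ → ℝ} (hf : f ∈ T M) :
    (fun x => Real.cos (x - c) * f x) ∈ T (M + 1) := by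
  induction hf using Submodule.span_induction with
  | mem g hg =>
    obtain ⟨s, h1, h2, hg | hg⟩ := hg <;> subst hg
    · have : (fun x => Real.cos (x - c) * Real.cos ((s : ℝ) * x))
          = Real.cos c • (fun x => Real.cos x * Real.cos ((s : ℝ) * x))
            + Real.sin c • (fun x => Real.sin x * Real.cos ((s : ℝ) * x)) := by
        funext x
        simp only [Pi.add_apply, Pi.smul_apply, smul_eq_mul, Real.cos_sub]
        ring
      rw [this]
      exact add_mem ((T _).smul_mem _ (cos_mul_cos_mem M s h1 h2))
        ((T _).smul_mem _ (sin_mul_cos_mem M s h1 h2))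
    · have : (fun x => Real.cos (x - c) * Real.sin ((s : ℝ) * x))
          = Real.cos c • (fun x => Real.cos x * Real.sin ((s : ℝ) * x))
            + Real.sin c • (fun x => Real.sin x * Real.sin ((s : ℝ) * x)) := by
        funext x
        simp only [Pi.add_apply, Pi.smul_apply, smul_eq_mul, Real.cos_sub]
        ring
      rw [this]
      exact add_mem ((T _).smul_mem _ (cos_mul_sin_mem M s h1 h2))
        ((T _).smul_mem _ (sin_mul_sin_mem M s h1 h2))
  | zero =>
    have : (fun x => Real.cos (x - c) * (0 : ℝ → ℝ) x) = (0 : ℝ → ℝ) := by funext x; simp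
    rw [this]; exact zero_mem _
  | add g₁ g₂ _ _ hg₁ hg₂ =>
    have : (fun x => Real.cos (x - c) * (g₁ + g₂) x)
        = (fun x => Real.cos (x - c) * g₁ x) + (fun x => Real.cos (x - c) * g₂ x) := by
      funext x; simp [mul_add]
    rw [this]; exact add_mem hg₁ hg₂
  | smul a g _ hg =>
    have : (fun x => Real.cos (x - c) * (a • g) x)
        = a • (fun x => Real.cos (x - c) * g x) := by
      funext x; simp [smul_eq_mul]; ring
    rw [this]; exact (T _).smul_mem _ hg


lemma pow_sin_mem (p : ℕ) (c : ℝ) {M : ℕ} {f : ℝ → ℝ} (hf : f ∈ T M) :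
    (fun x => Real.sin (x - c) ^ p * f x) ∈ T (M + p) := by
  induction p with
  | zero => simpa using hf
  | succ p ih =>
    have := mul_sin_mem (M + p) c ih
    have e : (fun x => Real.sin (x - c) * (Real.sin (x - c) ^ p * f x))
        = fun x => Real.sin (x - c) ^ (p + 1) * f x := by
      funext x; rw [pow_succ]; ring
    rw [e] at this
    rwa [show M + (p + 1) = M + p + 1 by omega]

lemma pow_cos_mem (p : ℕ) (c : ℝ) {M : ℕ} {f : ℝ → ℝ} (hf : f ∈ T M) :
    (fun x => Real.cos (x - c) ^ p * f x) ∈ T (M + p) := by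
  induction p with
  | zero => simpa using hf
  | succ p ih =>
    have := mul_cos_mem (M + p) c ih
    have e : (fun x => Real.cos (x - c) * (Real.cos (x - c) ^ p * f x))
        = fun x => Real.cos (x - c) ^ (p + 1) * f x := by
      funext x; rw [pow_succ]; ring
    rw [e] at this
    rwa [show M + (p + 1) = M + p + 1 by omega]

lemma prod_sin_mem {ι : Type*} [DecidableEq ι] (s : Finset ι) (a : ι → ℝ) (m : ι → ℕ)
    {M : ℕ} {f : ℝ → ℝ} (hf : f ∈ T M) :
    (fun x => (∏ i ∈ s, Real.sin (x - a i) ^ (m i)) * f x) ∈ T (M + ∑ i ∈ s, m i) := by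
  induction s using Finset.induction_on with
  | empty => simpa using hf
  | insert j s' hi ih =>
    have := pow_sin_mem (m j) (a j) ih
    have e : (fun x => Real.sin (x - a j) ^ (m j)
          * ((∏ i ∈ s', Real.sin (x - a i) ^ (m i)) * f x))
        = fun x => (∏ i ∈ insert j s', Real.sin (x - a i) ^ (m i)) * f x := by
      funext x; rw [Finset.prod_insert hi]; ring
    rw [e] at this
    rwa [show M + ∑ i ∈ insert j s', m i = M + ∑ i ∈ s', m i + m j by
      rw [Finset.sum_insert hi]; omega]

lemma one_mem : (fun _ : ℝ => (1 : ℝ)) ∈ T 0 := by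
  have : (fun _ : ℝ => (1 : ℝ)) = fun x => Real.cos ((0 : ℕ) * x) := by
    funext x; simp
  rw [this]
  exact Submodule.subset_span ⟨0, le_refl 0, rfl, Or.inl rfl⟩

/-! smoothness -/

lemma contDiff_sinpow (c : ℝ) (p : ℕ) : ContDiff ℝ (⊤ : ℕ∞) fun x : ℝ => Real.sin (x - c) ^ p :=
  (Real.contDiff_sin.comp (contDiff_id.sub contDiff_const)).pow p

lemma contDiff_cospow (c : ℝ) (p : ℕ) : ContDiff ℝ (⊤ : ℕ∞) fun x : ℝ => Real.cos (x - c) ^ p :=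
  (Real.contDiff_cos.comp (contDiff_id.sub contDiff_const)).pow p

lemma contDiff_prod_sin {ι : Type*} [DecidableEq ι] (s : Finset ι) (a : ι → ℝ) (m : ι → ℕ) :
    ContDiff ℝ (⊤ : ℕ∞) fun x : ℝ => ∏ i ∈ s, Real.sin (x - a i) ^ (m i) := by
  induction s using Finset.induction_on with
  | empty => simpa using contDiff_const
  | insert j s' hi ih =>
    have e : (fun x : ℝ => ∏ i ∈ insert j s', Real.sin (x - a i) ^ (m i))
        = fun x => Real.sin (x - a j) ^ (m j) * ∏ i ∈ s', Real.sin (x - a i) ^ (m i) := by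
      funext x; rw [Finset.prod_insert hi]
    rw [e]; exact (contDiff_sinpow (a j) (m j)).mul ih

/-! the key derivative lemma -/

lemma vanish (p : ℕ) : ∀ (G : ℝ → ℝ), ContDiff ℝ (⊤ : ℕ∞) G → ∀ (a : ℝ),
    (∀ q, q < p → iteratedDeriv q (fun x => Real.sin (x - a) ^ p * G x) a = 0)
    ∧ iteratedDeriv p (fun x => Real.sin (x - a) ^ p * G x) a = (p.factorial : ℝ) * G a := by
  induction p with
  | zero =>
    intro G hG a
    refine ⟨fun q hq => absurd hq (by omega), ?_⟩
    simp [iteratedDeriv_zero]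
  | succ p ih =>
    intro G hG a
    set G₁ : ℝ → ℝ :=
      fun x => ((p : ℝ) + 1) * Real.cos (x - a) * G x + Real.sin (x - a) * deriv G x with hG₁def
    have hG' : ContDiff ℝ (⊤ : ℕ∞) (deriv G) := (contDiff_infty_iff_deriv.mp hG).2
    have hG₁ : ContDiff ℝ (⊤ : ℕ∞) G₁ := by
      apply ContDiff.add
      · exact (contDiff_const.mul
          (Real.contDiff_cos.comp (contDiff_id.sub contDiff_const))).mul hG
      · exact (Real.contDiff_sin.comp (contDiff_id.sub contDiff_const)).mul hG'
    have hderiv : deriv (fun x => Real.sin (x - a) ^ (p + 1) * G x)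
        = fun x => Real.sin (x - a) ^ p * G₁ x := by
      funext x
      have h1 : HasDerivAt (fun x : ℝ => Real.sin (x - a)) (Real.cos (x - a)) x := by
        simpa using ((hasDerivAt_id x).sub_const a).sin
      have h2 : HasDerivAt (fun x : ℝ => Real.sin (x - a) ^ (p + 1))
          (((p : ℝ) + 1) * Real.sin (x - a) ^ p * Real.cos (x - a)) x := by
        simpa using h1.fun_pow (p + 1)
      have h3 : HasDerivAt G (deriv G x) x :=
        ((hG.differentiable (by simp)) x).hasDerivAt
      rw [(h2.fun_mul h3).deriv]
      rw [hG₁def]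
      simp only []
      rw [pow_succ]
      ring
    constructor
    · intro q hq
      match q with
      | 0 =>
        simp [iteratedDeriv_zero, sub_self, Real.sin_zero, zero_pow (Nat.succ_ne_zero p)]
      | (r + 1) =>
        rw [iteratedDeriv_succ', hderiv]
        exact (ih G₁ hG₁ a).1 r (by omega)
    · rw [iteratedDeriv_succ', hderiv, (ih G₁ hG₁ a).2]
      rw [hG₁def]
      simp only [sub_self, Real.cos_zero, Real.sin_zero, mul_one, zero_mul, add_zero,
        Nat.factorial_succ]
      push_cast
      ring

/-! linearity of iterated derivatives -/

lemma iter_add {n : ℕ} {f g : ℝ → ℝ} (hf : ContDiff ℝ (⊤ : ℕ∞) f) (hg : ContDiff ℝ (⊤ : ℕ∞) g) (x : ℝ) :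
    iteratedDeriv n (fun y => f y + g y) x = iteratedDeriv n f x + iteratedDeriv n g x := by
  have : (fun y => f y + g y) = f + g := rfl
  rw [this, ← iteratedDerivWithin_univ, ← iteratedDerivWithin_univ, ← iteratedDerivWithin_univ]
  exact iteratedDerivWithin_add (Set.mem_univ x) uniqueDiffOn_univ
    (hf.contDiffWithinAt.of_le (m := (n : WithTop ℕ∞)) (by exact_mod_cast le_top)) (hg.contDiffWithinAt.of_le (m := (n : WithTop ℕ∞)) (by exact_mod_cast le_top))

lemma iter_zero (n : ℕ) (x : ℝ) : iteratedDeriv n (fun _ : ℝ => (0 : ℝ)) x = 0 := by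
  induction n generalizing x with
  | zero => simp [iteratedDeriv_zero]
  | succ n ih =>
    rw [iteratedDeriv_succ']
    simp only [deriv_const']
    exact ih x

lemma iter_cmul {n : ℕ} {f : ℝ → ℝ} (hf : ContDiff ℝ (⊤ : ℕ∞) f) (c : ℝ) (x : ℝ) :
    iteratedDeriv n (fun y => c * f y) x = c * iteratedDeriv n f x := by
  have : (fun y => c * f y) = c • f := rfl
  rw [this, ← iteratedDerivWithin_univ, ← iteratedDerivWithin_univ]
  rw [iteratedDerivWithin_const_smul (Set.mem_univ x) uniqueDiffOn_univ c
    (hf.contDiffWithinAt.of_le (m := (n : WithTop ℕ∞)) (by exact_mod_cast le_top))]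
  simp

lemma iter_sum {ι : Type*} (s : Finset ι) (f : ι → ℝ → ℝ)
    (hf : ∀ i ∈ s, ContDiff ℝ (⊤ : ℕ∞) (f i)) (n : ℕ) (x : ℝ) :
    iteratedDeriv n (fun y => ∑ i ∈ s, f i y) x = ∑ i ∈ s, iteratedDeriv n (f i) x := by
  classical
  induction s using Finset.induction_on with
  | empty => simpa using iter_zero n x
  | insert j s' hi ih =>
    have e : (fun y => ∑ i ∈ insert j s', f i y)
        = fun y => f j y + ∑ i ∈ s', f i y := by
      funext y; rw [Finset.sum_insert hi]
    rw [e, iter_add (hf j (Finset.mem_insert_self j s'))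
      (ContDiff.sum fun i hi' => hf i (Finset.mem_insert_of_mem hi')),
      ih (fun i hi' => hf i (Finset.mem_insert_of_mem hi')), Finset.sum_insert hi]

/-! matrix lemma -/

lemma matrix_solve {n : ℕ} (A : Matrix (Fin n) (Fin n) ℝ)
    (htri : ∀ q p : Fin n, (q : ℕ) < (p : ℕ) → A q p = 0)
    (hdiag : ∀ p, A p p ≠ 0) (w : Fin n → ℝ) : ∃ c, A.mulVec c = w := by
  have hbt : Matrix.BlockTriangular A.transpose id := by
    intro i j hij
    exact htri j i hij
  have hdet : A.det ≠ 0 := by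
    rw [← Matrix.det_transpose A, Matrix.det_of_upperTriangular hbt]
    exact Finset.prod_ne_zero_iff.mpr fun p _ => hdiag p
  refine ⟨A⁻¹.mulVec w, ?_⟩
  rw [Matrix.mulVec_mulVec, Matrix.mul_nonsing_inv A (isUnit_iff_ne_zero.mpr hdet), Matrix.one_mulVec]


end Stmt8

open Stmt8

/-- With `M = m/2`, `𝒯` the `(M+1)`-dimensional space of trigonometric
polynomials spanned by `cos(st), sin(st)` for `0 ≤ s ≤ M` of the same parity as `M`,
and distinct times `t₁ < ⋯ < t_k` in `(0,π)` with multiplicities `mⱼ` summing to `M`,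
the evaluation map `𝒯 → ℝ^M`, `h ↦ (h^{(l)}(tⱼ))_{0 ≤ l ≤ mⱼ−1}`, is surjective. -/
theorem stmt8 (M k : ℕ) (hM : 0 < M)
    (t : Fin k → ℝ) (ht : ∀ j, t j ∈ Set.Ioo (0:ℝ) π)
    (htmono : StrictMono t)
    (mult : Fin k → ℕ) (hmult : ∀ j, 0 < mult j)
    (hsum : ∑ j, mult j = M)
    (𝒯 : Submodule ℝ (ℝ → ℝ))
    (h𝒯 : 𝒯 = Submodule.span ℝ
      {f : ℝ → ℝ | ∃ s : ℕ, s ≤ M ∧ s % 2 = M % 2 ∧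
        ((f = fun x => Real.cos ((s : ℝ) * x)) ∨ (f = fun x => Real.sin ((s : ℝ) * x)))}) :
    ∀ y : (j : Fin k) → Fin (mult j) → ℝ,
      ∃ h ∈ 𝒯, ∀ (j : Fin k) (l : Fin (mult j)),
        iteratedDeriv l.val h (t j) = y j l := by
  intro y
  classical
  -- the auxiliary functions
  set G : (j : Fin k) → Fin (mult j) → ℝ → ℝ := fun j p x =>
    Real.cos (x - t j) ^ (mult j - (p : ℕ))
      * ∏ i ∈ Finset.univ.erase j, Real.sin (x - t i) ^ (mult i) with hGdef
  set F : (j : Fin k) → Fin (mult j) → ℝ → ℝ := fun j p x =>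
    Real.sin (x - t j) ^ (p : ℕ) * G j p x with hFdef
  -- sines at distinct nodes don't vanish
  have hsin_ne : ∀ i j : Fin k, i ≠ j → Real.sin (t j - t i) ≠ 0 := by
    intro i j hij
    have h1 := ht i; have h2 := ht j
    simp only [Set.mem_Ioo] at h1 h2
    intro h0
    have := (Real.sin_eq_zero_iff_of_lt_of_lt (by linarith) (by linarith)).mp h0
    exact hij (htmono.injective (by linarith : t i = t j))
  have hGval : ∀ (j : Fin k) (p : Fin (mult j)), G j p (t j) ≠ 0 := by
    intro j p
    rw [hGdef]
    simp only [sub_self, Real.cos_zero, one_pow, one_mul]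
    exact Finset.prod_ne_zero_iff.mpr fun i hi =>
      pow_ne_zero _ (hsin_ne i j (Finset.mem_erase.mp hi).1)
  -- smoothness
  have hGcont : ∀ (j : Fin k) (p : Fin (mult j)), ContDiff ℝ (⊤ : ℕ∞) (G j p) := by
    intro j p
    exact (contDiff_cospow (t j) _).mul (contDiff_prod_sin _ t mult)
  have hFcont : ∀ (j : Fin k) (p : Fin (mult j)), ContDiff ℝ (⊤ : ℕ∞) (F j p) := by
    intro j p
    exact (contDiff_sinpow (t j) _).mul (hGcont j p)
  -- membership
  have hFmem : ∀ (j : Fin k) (p : Fin (mult j)), F j p ∈ T M := by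
    intro j p
    have h0 := prod_sin_mem (Finset.univ.erase j) t mult one_mem
    have h1 := pow_cos_mem (mult j - (p : ℕ)) (t j) h0
    have h2 := pow_sin_mem (p : ℕ) (t j) h1
    have hsum' : mult j + ∑ i ∈ Finset.univ.erase j, mult i = M := by
      rw [Finset.add_sum_erase Finset.univ mult (Finset.mem_univ j)]; exact hsum
    have hidx : 0 + ∑ i ∈ Finset.univ.erase j, mult i + (mult j - (p : ℕ)) + (p : ℕ) = M := by
      have := p.isLt; omega
    rw [hidx] at h2
    have e : (fun x => Real.sin (x - t j) ^ (p : ℕ)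
        * (Real.cos (x - t j) ^ (mult j - (p : ℕ))
          * ((∏ i ∈ Finset.univ.erase j, Real.sin (x - t i) ^ (mult i)) * 1))) = F j p := by
      funext x; rw [hFdef, hGdef]; ring
    rwa [e] at h2
  -- the matrices
  set A : (j : Fin k) → Matrix (Fin (mult j)) (Fin (mult j)) ℝ := fun j q p =>
    iteratedDeriv (q : ℕ) (F j p) (t j) with hAdef
  have hc : ∀ j, ∃ c : Fin (mult j) → ℝ, (A j).mulVec c = fun q => y j q := by
    intro j
    apply matrix_solve
    · intro q p hqp
      exact (vanish (p : ℕ) (G j p) (hGcont j p) (t j)).1 (q : ℕ) hqp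
    · intro p
      rw [hAdef]
      simp only []
      rw [(vanish (p : ℕ) (G j p) (hGcont j p) (t j)).2]
      exact mul_ne_zero (Nat.cast_ne_zero.mpr (Nat.factorial_ne_zero _)) (hGval j p)
  choose c hcspec using hc
  -- the answer
  refine ⟨fun x => ∑ j, ∑ p, c j p * F j p x, ?_, ?_⟩
  · -- membership
    subst h𝒯
    have e : (fun x => ∑ j, ∑ p, c j p * F j p x)
        = ∑ j : Fin k, ∑ p : Fin (mult j), c j p • F j p := by
      funext x; simp [Finset.sum_apply, Pi.smul_apply, smul_eq_mul]
    rw [e]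
    exact Submodule.sum_mem _ fun j _ => Submodule.sum_mem _ fun p _ =>
      Submodule.smul_mem _ _ (hFmem j p)
  · -- evaluation
    intro j₀ l
    rw [iter_sum Finset.univ _ (fun j _ => ContDiff.sum fun p _ =>
      contDiff_const.mul (hFcont j p)) _ _]
    have step : ∀ j, iteratedDeriv (l : ℕ) (fun x => ∑ p, c j p * F j p x) (t j₀)
        = ∑ p, c j p * iteratedDeriv (l : ℕ) (F j p) (t j₀) := by
      intro j
      rw [iter_sum Finset.univ _ (fun p _ => contDiff_const.mul (hFcont j p)) _ _]
      exact Finset.sum_congr rfl fun p _ => iter_cmul (hFcont j p) _ _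
    simp only [step]
    rw [Finset.sum_eq_single j₀]
    · -- main block
      have := congrFun (hcspec j₀) l
      simp only [Matrix.mulVec, dotProduct, hAdef] at this
      rw [← this]
      exact Finset.sum_congr rfl fun p _ => by ring
    · -- cross terms vanish
      intro j _ hj
      apply Finset.sum_eq_zero
      intro p _
      have hmem : j₀ ∈ Finset.univ.erase j := Finset.mem_erase.mpr ⟨Ne.symm hj, Finset.mem_univ _⟩
      have e : F j p = fun x => Real.sin (x - t j₀) ^ (mult j₀)
          * (Real.sin (x - t j) ^ (p : ℕ) * Real.cos (x - t j) ^ (mult j - (p : ℕ))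
            * ∏ i ∈ (Finset.univ.erase j).erase j₀, Real.sin (x - t i) ^ (mult i)) := by
        funext x
        rw [hFdef, hGdef]
        simp only []
        rw [← Finset.mul_prod_erase (Finset.univ.erase j) _ hmem]
        ring
      rw [e]
      have hH : ContDiff ℝ (⊤ : ℕ∞) (fun x => Real.sin (x - t j) ^ (p : ℕ)
          * Real.cos (x - t j) ^ (mult j - (p : ℕ))
          * ∏ i ∈ (Finset.univ.erase j).erase j₀, Real.sin (x - t i) ^ (mult i)) :=
        ((contDiff_sinpow (t j) _).mul (contDiff_cospow (t j) _)).mul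
          (contDiff_prod_sin _ t mult)
      rw [(vanish (mult j₀) _ hH (t j₀)).1 (l : ℕ) l.isLt]
      ring
    · intro h; exact absurd (Finset.mem_univ j₀) h
end

section
/- The functions g_{j,l}(t) = (cos^l(t−t_j)/sin^l(t−t_j)) · ∏_{i=1}^{k} sin^{m_i}(t−t_i), for j = 1,…,k and l = 1,…,m_j (where l ≤ m_j so the product is a trigonometric polynomial), are linearly independent over ℝ. -/
open Real Filter Topology

private lemma stmt9_aux_pow (a b : ℝ) (ha : a ≠ 0) (hb : b ≠ 0) (m e : ℕ) :
    a ^ m / b ^ m * (b / a) ^ (m + e) = (b / a) ^ e := by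
  rw [pow_add]
  field_simp
  rw [← mul_pow, mul_div_assoc', mul_div_cancel_left₀ b ha]

private lemma stmt9_sigma_snd {k : ℕ} {mult : Fin k → ℕ} {j : Fin k} {a b : Fin (mult j)}
    (h : (⟨j, a⟩ : Σ i : Fin k, Fin (mult i)) = ⟨j, b⟩) : a = b := by
  simpa using h

/-- The functions
`g_{j,l}(t) = (cos^l(t−tⱼ)/sin^l(t−tⱼ)) · ∏ᵢ sin^{mᵢ}(t−tᵢ)`, for `j = 1,…,k`
and `l = 1,…,mⱼ`, are linearly independent over `ℝ`. -/
theorem stmt9 (k : ℕ) (t : Fin k → ℝ)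
    (ht : ∀ j, t j ∈ Set.Ioo (0:ℝ) π)
    (htinj : Function.Injective t)
    (mult : Fin k → ℕ) (hmult : ∀ j, 0 < mult j) :
    LinearIndependent ℝ
      (fun p : Σ j : Fin k, Fin (mult j) =>
        (fun x : ℝ =>
          (Real.cos (x - t p.1)) ^ (p.2.val + 1) / (Real.sin (x - t p.1)) ^ (p.2.val + 1)
            * ∏ i, (Real.sin (x - t i)) ^ (mult i))) := by
  classical
  rw [Fintype.linearIndependent_iff]
  intro c hc
  have hpt : ∀ x : ℝ, ∑ p : Σ j : Fin k, Fin (mult j), c p *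
      (Real.cos (x - t p.1) ^ (p.2.val + 1) / Real.sin (x - t p.1) ^ (p.2.val + 1)
        * ∏ i, Real.sin (x - t i) ^ (mult i)) = 0 := by
    intro x
    have h := congrFun hc x
    simpa [Finset.sum_apply, Pi.smul_apply, smul_eq_mul] using h
  -- sin of differences is nonzero
  have hsd : ∀ i j : Fin k, i ≠ j → Real.sin (t i - t j) ≠ 0 := by
    intro i j hij
    obtain ⟨hi1, hi2⟩ := ht i
    obtain ⟨hj1, hj2⟩ := ht j
    intro h
    have h0 : t i - t j = 0 :=
      (Real.sin_eq_zero_iff_of_lt_of_lt (by linarith) (by linarith)).mp h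
    exact hij (htinj (by linarith))
  -- the "cotangent sum" vanishes on good points
  have hQ : ∀ x : ℝ, (∀ i, Real.sin (x - t i) ≠ 0) →
      ∑ p : Σ j : Fin k, Fin (mult j), c p *
        (Real.cos (x - t p.1) ^ (p.2.val + 1) / Real.sin (x - t p.1) ^ (p.2.val + 1)) = 0 := by
    intro x hx
    have hP : (∏ i, Real.sin (x - t i) ^ (mult i)) ≠ 0 :=
      Finset.prod_ne_zero_iff.mpr fun i _ => pow_ne_zero _ (hx i)
    have h := hpt x
    rw [show (∑ p : Σ j : Fin k, Fin (mult j), c p *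
        (Real.cos (x - t p.1) ^ (p.2.val + 1) / Real.sin (x - t p.1) ^ (p.2.val + 1)
          * ∏ i, Real.sin (x - t i) ^ (mult i)))
      = (∑ p : Σ j : Fin k, Fin (mult j), c p *
        (Real.cos (x - t p.1) ^ (p.2.val + 1) / Real.sin (x - t p.1) ^ (p.2.val + 1)))
        * ∏ i, Real.sin (x - t i) ^ (mult i) from by
        rw [Finset.sum_mul]; exact Finset.sum_congr rfl fun p _ => by ring] at h
    exact (mul_eq_zero.mp h).resolve_right hP
  -- the good set clusters at each t j
  have hV : ∀ j : Fin k,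
      (𝓝[{x : ℝ | (∀ i, Real.sin (x - t i) ≠ 0) ∧ Real.cos (x - t j) ≠ 0} \ {t j}]
        (t j)).NeBot := by
    intro j
    rw [← mem_closure_iff_nhdsWithin_neBot]
    have hcnt : ((⋃ i : Fin k, {x : ℝ | Real.sin (x - t i) = 0}) ∪
        {x : ℝ | Real.cos (x - t j) = 0} ∪ {t j}).Countable := by
      refine ((Set.Countable.union (Set.countable_iUnion fun i => ?_) ?_).union
        (Set.countable_singleton _))
      · apply Set.Countable.mono _ (Set.countable_range (fun n : ℤ => t i + n * π))
        intro x hx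
        obtain ⟨n, hn⟩ := Real.sin_eq_zero_iff.mp hx
        exact ⟨n, by simp; linarith⟩
      · apply Set.Countable.mono _ (Set.countable_range (fun n : ℤ => t j + (2*n+1) * π / 2))
        intro x hx
        obtain ⟨n, hn⟩ := Real.cos_eq_zero_iff.mp hx
        exact ⟨n, by simp; linarith⟩
    have hd := hcnt.dense_compl ℝ
    refine (hd.mono ?_) (t j)
    intro x hx
    simp only [Set.mem_compl_iff, Set.mem_union, Set.mem_iUnion, Set.mem_setOf_eq,
      Set.mem_singleton_iff, not_or, not_exists] at hx
    exact ⟨⟨fun i => hx.1.1 i, hx.1.2⟩, hx.2⟩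
  -- downward strong induction on mult j - (l+1)
  suffices key : ∀ d : ℕ, ∀ p : Σ j : Fin k, Fin (mult j),
      mult p.1 - (p.2.val + 1) = d → c p = 0 by
    intro p; exact key _ p rfl
  intro d
  induction d using Nat.strong_induction_on with
  | _ d IH =>
  rintro ⟨j, l⟩ hd
  simp only at hd
  have hhigh : ∀ l' : Fin (mult j), l.val < l'.val → c ⟨j, l'⟩ = 0 := by
    intro l' hl'
    have h1 := l'.isLt
    have h2 := l.isLt
    exact IH (mult j - (l'.val + 1)) (by omega) ⟨j, l'⟩ rfl
  haveI := hV j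
  set V : Set ℝ := {x : ℝ | (∀ i, Real.sin (x - t i) ≠ 0) ∧ Real.cos (x - t j) ≠ 0} with hVdef
  have hF0 : ∀ x ∈ V \ {t j},
      (∑ p : Σ j : Fin k, Fin (mult j), c p *
        (Real.cos (x - t p.1) ^ (p.2.val + 1) / Real.sin (x - t p.1) ^ (p.2.val + 1))
        * (Real.sin (x - t j) / Real.cos (x - t j)) ^ (l.val + 1)) = 0 := by
    intro x hx
    rw [← Finset.sum_mul, hQ x hx.1.1, zero_mul]
  have hT : Filter.Tendsto (fun x => ∑ p : Σ j : Fin k, Fin (mult j), c p *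
        (Real.cos (x - t p.1) ^ (p.2.val + 1) / Real.sin (x - t p.1) ^ (p.2.val + 1))
        * (Real.sin (x - t j) / Real.cos (x - t j)) ^ (l.val + 1))
      (𝓝[V \ {t j}] (t j)) (𝓝 (c ⟨j, l⟩)) := by
    have hsum : c ⟨j,l⟩ = ∑ p : Σ j : Fin k, Fin (mult j),
        (if p = ⟨j,l⟩ then c ⟨j,l⟩ else 0) := by simp
    rw [hsum]
    apply tendsto_finset_sum
    rintro ⟨pj, pl⟩ -
    by_cases hpj : pj = j
    · subst hpj
      by_cases hcase : l.val < pl.val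
      · have hne : (⟨pj, pl⟩ : Σ i : Fin k, Fin (mult i)) ≠ ⟨pj, l⟩ := by
          intro h
          have : pl.val = l.val := congrArg Fin.val (stmt9_sigma_snd h)
          omega
        rw [if_neg hne]
        simp only [hhigh pl hcase, zero_mul]
        exact tendsto_const_nhds
      · push_neg at hcase
        have hcongr : ∀ x ∈ V \ {t pj},
            c ⟨pj,pl⟩ * (Real.cos (x - t pj) ^ (pl.val+1) / Real.sin (x - t pj) ^ (pl.val+1))
              * (Real.sin (x - t pj) / Real.cos (x - t pj)) ^ (l.val + 1)
            = c ⟨pj,pl⟩ * (Real.sin (x - t pj) / Real.cos (x - t pj)) ^ (l.val - pl.val) := by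
          intro x hx
          have hs : Real.sin (x - t pj) ≠ 0 := hx.1.1 pj
          have hcos : Real.cos (x - t pj) ≠ 0 := hx.1.2
          rw [mul_assoc, show l.val + 1 = (pl.val + 1) + (l.val - pl.val) by omega,
            stmt9_aux_pow _ _ hcos hs]
        have hct : ContinuousAt (fun x =>
            c ⟨pj,pl⟩ * (Real.sin (x - t pj) / Real.cos (x - t pj)) ^ (l.val - pl.val))
            (t pj) := by
          apply ContinuousAt.mul continuousAt_const
          apply ContinuousAt.pow
          apply ContinuousAt.div (by fun_prop) (by fun_prop)
          simp
        have hev : (fun x =>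
            c ⟨pj,pl⟩ * (Real.sin (x - t pj) / Real.cos (x - t pj)) ^ (l.val - pl.val))
            =ᶠ[𝓝[V \ {t pj}] (t pj)] (fun x =>
            c ⟨pj,pl⟩ * (Real.cos (x - t pj) ^ (pl.val+1) / Real.sin (x - t pj) ^ (pl.val+1))
              * (Real.sin (x - t pj) / Real.cos (x - t pj)) ^ (l.val + 1)) :=
          eventually_nhdsWithin_of_forall fun x hx => (hcongr x hx).symm
        have htend := (hct.tendsto.mono_left nhdsWithin_le_nhds).congr' hev
        have hval : (if (⟨pj,pl⟩ : Σ i : Fin k, Fin (mult i)) = ⟨pj,l⟩ then c ⟨pj,l⟩ else 0)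
            = c ⟨pj,pl⟩ * (Real.sin (t pj - t pj) / Real.cos (t pj - t pj)) ^ (l.val - pl.val) := by
          by_cases h : pl = l
          · subst h
            simp
          · have hne : (⟨pj, pl⟩ : Σ i : Fin k, Fin (mult i)) ≠ ⟨pj, l⟩ := by
              intro hh
              exact h (stmt9_sigma_snd hh)
            rw [if_neg hne]
            have hvne : pl.val ≠ l.val := fun hh => h (Fin.ext hh)
            rw [sub_self, Real.sin_zero, Real.cos_zero]
            rw [zero_div, zero_pow (by omega : l.val - pl.val ≠ 0), mul_zero]
        rw [hval]
        exact htend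
    · have hne : (⟨pj, pl⟩ : Σ i : Fin k, Fin (mult i)) ≠ ⟨j, l⟩ := by
        intro h
        exact hpj (congrArg Sigma.fst h)
      rw [if_neg hne]
      have hs : Real.sin (t j - t pj) ≠ 0 := hsd j pj (Ne.symm hpj)
      have hct : ContinuousAt (fun x =>
          c ⟨pj,pl⟩ * (Real.cos (x - t pj) ^ (pl.val+1) / Real.sin (x - t pj) ^ (pl.val+1))
            * (Real.sin (x - t j) / Real.cos (x - t j)) ^ (l.val + 1)) (t j) := by
        apply ContinuousAt.mul
        · apply ContinuousAt.mul continuousAt_const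
          exact ContinuousAt.div (by fun_prop) (by fun_prop) (pow_ne_zero _ hs)
        · exact ContinuousAt.pow (ContinuousAt.div (by fun_prop) (by fun_prop) (by simp)) _
      have htend := hct.tendsto.mono_left (nhdsWithin_le_nhds (s := V \ {t j}))
      simpa [sub_self, Real.sin_zero, Real.cos_zero,
        zero_pow (Nat.succ_ne_zero l.val)] using htend
  have hzero : Filter.Tendsto (fun x => ∑ p : Σ j : Fin k, Fin (mult j), c p *
        (Real.cos (x - t p.1) ^ (p.2.val + 1) / Real.sin (x - t p.1) ^ (p.2.val + 1))
        * (Real.sin (x - t j) / Real.cos (x - t j)) ^ (l.val + 1))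
      (𝓝[V \ {t j}] (t j)) (𝓝 0) :=
    Filter.Tendsto.congr' (eventually_nhdsWithin_of_forall fun x hx => (hF0 x hx).symm)
      tendsto_const_nhds
  exact tendsto_nhds_unique hT hzero
end

section
/- Let ℝ^k = Σ₁ ⊕ Σ₂ be an orthogonal decomposition and let Γ be a set of affine hyperplanes (walls) in ℝ^k, invariant under the group W generated by reflections in the walls. Suppose: (a) only finitely many walls have normal vector not tangent to Σ₂, and (b) for every unit vector u₂ ∈ Σ₂ there are infinitely many walls with normal v tangent to Σ₂ satisfying ⟨v, u₂⟩ ≠ 0. Then every wall in Γ has normal vector tangent to Σ₁ or tangent to Σ₂. -/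
open Real

/-- Let `ℝ^k = Sig1 ⊕ Sig2` be an orthogonal decomposition and `Γ` a
set of walls (affine hyperplanes, encoded as pairs `(unit normal, offset)`),
invariant under the reflections in its own walls. If (a) only finitely many
walls have normal not tangent to `Sig2`, and (b) for every unit vector
`u₂ ∈ Sig2` there are infinitely many walls with normal `v` tangent to `Sig2` and
`⟪v, u₂⟫ ≠ 0`, then every wall has normal tangent to `Sig1` or tangent to `Sig2`. -/
theorem stmt18 (k : ℕ)
    (Sig2 : Submodule ℝ (EuclideanSpace ℝ (Fin k)))
    (Sig1 : Submodule ℝ (EuclideanSpace ℝ (Fin k))) (hSig : Sig1 = Sig2ᗮ)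
    (Γ : Set (EuclideanSpace ℝ (Fin k) × ℝ))
    (hunit : ∀ w ∈ Γ, ‖w.1‖ = 1)
    -- `Γ` is invariant under the reflection through each of its walls:
    (hrefl : ∀ w ∈ Γ, ∀ w' ∈ Γ,
      (w'.1 - (2 * (inner ℝ w'.1 w.1 : ℝ)) • w.1,
        w'.2 - 2 * w.2 * (inner ℝ w'.1 w.1 : ℝ)) ∈ Γ)
    -- (a): only finitely many walls have normal not tangent to Sig2:
    (hfin : {w ∈ Γ | w.1 ∉ Sig2}.Finite)
    -- (b): for every unit vector u₂ ∈ Sig2, infinitely many walls have normal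
    -- tangent to Sig2 and not perpendicular to u₂:
    (hinf : ∀ u₂ : EuclideanSpace ℝ (Fin k), u₂ ∈ Sig2 → ‖u₂‖ = 1 →
      {w ∈ Γ | w.1 ∈ Sig2 ∧ (inner ℝ w.1 u₂ : ℝ) ≠ 0}.Infinite) :
    ∀ w ∈ Γ, w.1 ∈ Sig1 ∨ w.1 ∈ Sig2 := by
  intro w hw
  by_contra hcon
  push_neg at hcon
  obtain ⟨h1, h2⟩ := hcon
  set u : EuclideanSpace ℝ (Fin k) := w.1 with hu
  set p : EuclideanSpace ℝ (Fin k) := (Sig2.orthogonalProjection u : EuclideanSpace ℝ (Fin k))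
    with hp
  have hpmem : p ∈ Sig2 := (Sig2.orthogonalProjection u).2
  have hq : u - p ∈ Sig2ᗮ := Sig2.sub_starProjection_mem_orthogonal u
  have hpne : p ≠ 0 := by
    intro h
    apply h1
    rw [hSig]
    have := hq
    rwa [h, sub_zero] at this
  have hupne : u - p ≠ 0 := by
    intro h
    apply h2
    have : u = p := by rwa [sub_eq_zero] at h
    rw [this]; exact hpmem
  have hpn : ‖p‖ ≠ 0 := norm_ne_zero_iff.mpr hpne
  set e : EuclideanSpace ℝ (Fin k) := ‖p‖⁻¹ • p with he
  have hemem : e ∈ Sig2 := Sig2.smul_mem _ hpmem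
  have henorm : ‖e‖ = 1 := by
    rw [he, norm_smul, norm_inv, norm_norm, inv_mul_cancel₀ hpn]
  have hinfS := hinf e hemem henorm
  have huu : (inner ℝ u u : ℝ) = 1 := by
    rw [real_inner_self_eq_norm_sq, hunit w hw]; norm_num
  set f : EuclideanSpace ℝ (Fin k) × ℝ → EuclideanSpace ℝ (Fin k) × ℝ :=
    fun w' => (w'.1 - (2 * (inner ℝ w'.1 u : ℝ)) • u, w'.2 - 2 * w.2 * (inner ℝ w'.1 u : ℝ))
    with hf
  have hkey : ∀ v : EuclideanSpace ℝ (Fin k), v ∈ Sig2 → (inner ℝ v u : ℝ) = inner ℝ v p := by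
    intro v hv
    have h0 : (inner ℝ v (u - p) : ℝ) = 0 := hq v hv
    rw [inner_sub_right] at h0
    linarith
  set S := {w' ∈ Γ | w'.1 ∈ Sig2 ∧ (inner ℝ w'.1 e : ℝ) ≠ 0} with hS
  have hmaps : ∀ w' ∈ S, f w' ∈ {w ∈ Γ | w.1 ∉ Sig2} := by
    intro w' hw'
    obtain ⟨hw'Γ, hv2, hve⟩ := hw'
    refine ⟨hrefl w hw w' hw'Γ, ?_⟩
    intro hmem
    have hvu : (inner ℝ w'.1 u : ℝ) ≠ 0 := by
      rw [hkey _ hv2]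
      intro h
      apply hve
      rw [he, real_inner_smul_right, h, mul_zero]
    have hd : (w'.1 - (2 * (inner ℝ w'.1 u : ℝ)) • p) - (w'.1 - (2 * (inner ℝ w'.1 u : ℝ)) • u)
        = (2 * (inner ℝ w'.1 u : ℝ)) • (u - p) := by
      rw [smul_sub]; abel
    have hmem2 : (2 * (inner ℝ w'.1 u : ℝ)) • (u - p) ∈ Sig2 := by
      rw [← hd]
      exact Sig2.sub_mem (Sig2.sub_mem hv2 (Sig2.smul_mem _ hpmem)) hmem
    have hmem3 : (2 * (inner ℝ w'.1 u : ℝ)) • (u - p) ∈ Sig2ᗮ := Sig2ᗮ.smul_mem _ hq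
    have hz : (2 * (inner ℝ w'.1 u : ℝ)) • (u - p) = 0 := by
      have := hmem3 _ hmem2
      rwa [inner_self_eq_zero] at this
    rcases smul_eq_zero.mp hz with h | h
    · exact hvu (by linarith [mul_eq_zero.mp h |>.resolve_left (by norm_num : (2:ℝ) ≠ 0)])
    · exact hupne h
  have hinj : Set.InjOn f S := by
    intro a ha b hb hab
    have h1' := congrArg Prod.fst hab
    have h2' := congrArg Prod.snd hab
    simp only [hf] at h1' h2'
    have hia : (inner ℝ (a.1 - (2 * (inner ℝ a.1 u : ℝ)) • u) u : ℝ) = - (inner ℝ a.1 u : ℝ) := by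
      rw [inner_sub_left, real_inner_smul_left, huu]; ring
    have hib : (inner ℝ (b.1 - (2 * (inner ℝ b.1 u : ℝ)) • u) u : ℝ) = - (inner ℝ b.1 u : ℝ) := by
      rw [inner_sub_left, real_inner_smul_left, huu]; ring
    have hieq : (inner ℝ a.1 u : ℝ) = inner ℝ b.1 u := by
      have := hia.symm.trans (by rw [h1', hib])
      linarith
    have hfst : a.1 = b.1 := by
      have := h1'
      rw [hieq] at this
      exact sub_left_injective this
    have hsnd : a.2 = b.2 := by
      rw [hieq] at h2'
      linarith
    exact Prod.ext hfst hsnd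
  have himg : (f '' S).Infinite := hinfS.image hinj
  exact himg (hfin.subset (by rintro x ⟨a, ha, rfl⟩; exact hmaps a ha))
end
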